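/- Let (W, S) be a Coxeter system with length function ℓ, let J ⊆ S, and let W_J be the standard parabolic subgroup of W generated by J. Let x ∈ W be an element of minimal length in its coset x·W_J, i.e. ℓ(x) ≤ ℓ(w) for all w ∈ x·W_J. If t₁ and t₂ are reflections of W (conjugates of elements of S) such that ℓ(t₁x) < ℓ(x), ℓ(t₂x) < ℓ(x), and t₁x·W_J = t₂x·W_J, then t₁ = t₂. -/

import Mathlib

open scoped Pointwise
open List

namespace CoxAux

open CoxeterSystem

variable {B W : Type*} [Group W] {M : CoxeterMatrix B} (cs : CoxeterSystem M W)

local prefix:100 "s" => cs.simple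
local prefix:100 "π" => cs.wordProd
local prefix:100 "ℓ" => cs.length

open scoped Classical in
/-- The sign-permutation associated to a simple reflection. -/
noncomputable def sigma (i : B) : Equiv.Perm (W × ℤˣ) :=
  Function.Involutive.toPerm
    (fun p => (s i * p.1 * s i, if p.1 = s i then -p.2 else p.2))
    (by
      intro p
      obtain ⟨w, ε⟩ := p
      have key : s i * (s i * w * s i) * s i = w := by
        rw [← mul_assoc, ← mul_assoc, cs.simple_mul_simple_self, one_mul, mul_assoc,
          cs.simple_mul_simple_self, mul_one]
      have hcond : (s i * w * s i = s i) ↔ (w = s i) := by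
        constructor
        · intro h
          have := congrArg (fun z => s i * z * s i) h
          rw [key] at this
          rw [this, mul_assoc, cs.simple_mul_simple_self, mul_one]
        · intro h
          rw [h, cs.simple_mul_simple_self, one_mul]
      by_cases h : w = s i
      · simp [h, hcond, key]
      · simp [h, hcond, key])

open scoped Classical in
theorem sigma_apply (i : B) (w : W) (ε : ℤˣ) :
    sigma cs i (w, ε) = (s i * w * s i, if w = s i then -ε else ε) := rfl

theorem alt_pow (i j : B) (k : ℕ) : (s j * s i) ^ k * s j = s j * (s i * s j) ^ k := by
  induction k with
  | zero => simp
  | succ k ih =>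
    rw [pow_succ' (s j * s i), mul_assoc, ih, pow_succ' (s i * s j)]
    simp [mul_assoc]

theorem inv_pow_simple (i j : B) (k : ℕ) : ((s i * s j) ^ k)⁻¹ = (s j * s i) ^ k := by
  rw [← inv_pow, mul_inv_rev, cs.inv_simple, cs.inv_simple]

private theorem conj_eq_iff (a b c d : W) : a * b * c = d ↔ b = a⁻¹ * d * c⁻¹ := by
  constructor
  · intro h; rw [← h]; group
  · intro h; rw [h]; group

open scoped Classical in
theorem sigma_mul_pow_apply (i j : B) (k : ℕ) (w : W) (ε : ℤˣ) :
    ((sigma cs i * sigma cs j) ^ k) (w, ε) =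
      ((s i * s j) ^ k * w * (s j * s i) ^ k,
        ε * ∏ r ∈ Finset.range (2 * k),
          (if w = s j * (s i * s j) ^ r then (-1 : ℤˣ) else 1)) := by
  induction k generalizing ε with
  | zero => simp
  | succ k ih =>
    have condA : ((s i * s j) ^ k * w * (s j * s i) ^ k = s j) ↔
        (w = s j * (s i * s j) ^ (2 * k)) := by
      rw [conj_eq_iff, inv_pow_simple, inv_pow_simple, alt_pow, two_mul, pow_add, mul_assoc]
    have condB : (s j * ((s i * s j) ^ k * w * (s j * s i) ^ k) * s j = s i) ↔
        (w = s j * (s i * s j) ^ (2 * k + 1)) := by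
      have h1 : s j * ((s i * s j) ^ k * w * (s j * s i) ^ k) * s j
          = (s j * (s i * s j) ^ k) * w * ((s j * s i) ^ k * s j) := by
        simp [mul_assoc]
      rw [h1, conj_eq_iff]
      have h2 : (s j * (s i * s j) ^ k)⁻¹ = (s j * s i) ^ k * s j := by
        rw [mul_inv_rev, inv_pow_simple, cs.inv_simple, alt_pow]
      have h3 : ((s j * s i) ^ k * s j)⁻¹ = s j * (s i * s j) ^ k := by
        rw [alt_pow, mul_inv_rev, inv_pow_simple, cs.inv_simple, alt_pow]
      rw [h2, h3, alt_pow]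
      constructor
      · intro h
        rw [h]
        have : 2 * k + 1 = k + (1 + k) := by ring
        rw [this, pow_add, pow_add, pow_one]
        simp [mul_assoc]
      · intro h
        rw [h]
        have : 2 * k + 1 = k + (1 + k) := by ring
        rw [this, pow_add, pow_add, pow_one]
        simp [mul_assoc]
    rw [pow_succ' (sigma cs i * sigma cs j), Equiv.Perm.mul_apply, ih,
      Equiv.Perm.mul_apply, sigma_apply, sigma_apply]
    simp only [condA, condB]
    have hrange : 2 * (k + 1) = 2 * k + 1 + 1 := by ring
    rw [hrange, Finset.prod_range_succ, Finset.prod_range_succ]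
    simp only [Prod.mk.injEq]
    constructor
    · rw [pow_succ' (s i * s j), pow_succ (s j * s i)]
      simp [mul_assoc]
    · by_cases h1 : w = s j * (s i * s j) ^ (2 * k) <;>
        by_cases h2 : w = s j * (s i * s j) ^ (2 * k + 1) <;>
        simp [h1, h2, mul_assoc, mul_neg, neg_neg]

theorem liftable : M.IsLiftable (fun i => sigma cs i) := by
  intro i j
  classical
  apply Equiv.ext
  rintro ⟨w, ε⟩
  rw [sigma_mul_pow_apply, cs.simple_mul_simple_pow, cs.simple_mul_simple_pow']
  have hper : ∀ r : ℕ, (if w = s j * (s i * s j) ^ (M i j + r) then (-1 : ℤˣ) else 1)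
      = (if w = s j * (s i * s j) ^ r then (-1 : ℤˣ) else 1) := by
    intro r
    rw [pow_add, cs.simple_mul_simple_pow, one_mul]
  have : ∏ r ∈ Finset.range (2 * M i j),
      (if w = s j * (s i * s j) ^ r then (-1 : ℤˣ) else 1) = 1 := by
    rw [two_mul, Finset.prod_range_add]
    simp only [hper]
    exact Int.units_mul_self _
  rw [this]
  simp

/-- The sign representation of the Coxeter group on `W × ℤˣ`. -/
noncomputable def phi : W →* Equiv.Perm (W × ℤˣ) :=
  cs.lift ⟨fun i => sigma cs i, liftable cs⟩

theorem phi_simple (i : B) : phi cs (s i) = sigma cs i :=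
  cs.lift_apply_simple (liftable cs) i

open scoped Classical in
/-- The sign of `w` in the list `l`. -/
noncomputable def signOf (w : W) (l : List W) : ℤˣ :=
  (l.map (fun t => if w = t then (-1 : ℤˣ) else 1)).prod

omit [Group W] in
theorem signOf_eq_one_of_not_mem {w : W} {l : List W} (h : w ∉ l) : signOf w l = 1 := by
  classical
  apply List.prod_eq_one
  intro x hx
  obtain ⟨t, ht, rfl⟩ := List.mem_map.mp hx
  rw [if_neg]
  intro hc
  exact h (hc ▸ ht)

open scoped Classical in
theorem phi_wordProd (ω : List B) (w : W) (ε : ℤˣ) :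
    phi cs (π ω) (w, ε) = (π ω * w * (π ω)⁻¹, ε * signOf w (cs.rightInvSeq ω)) := by
  induction ω generalizing w ε with
  | nil => simp [signOf]
  | cons i ω ih =>
    rw [cs.wordProd_cons, map_mul, Equiv.Perm.mul_apply, ih, phi_simple, sigma_apply]
    have hris : cs.rightInvSeq (i :: ω) = ((π ω)⁻¹ * s i * π ω) :: cs.rightInvSeq ω := rfl
    have hcond : (π ω * w * (π ω)⁻¹ = s i) ↔ (w = (π ω)⁻¹ * s i * π ω) := by
      rw [conj_eq_iff, inv_inv]
    rw [hris]
    simp only [signOf, List.map_cons, List.prod_cons, hcond, Prod.mk.injEq]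
    constructor
    · rw [mul_inv_rev, cs.inv_simple]
      simp [mul_assoc]
    · by_cases h : w = (π ω)⁻¹ * s i * π ω <;> simp [h, mul_assoc, mul_neg]

theorem phi_apply' (v w : W) (ε : ℤˣ) :
    phi cs v (w, ε) = (v * w * v⁻¹, ε * (phi cs v (w, 1)).2) := by
  obtain ⟨ω, -, rfl⟩ := cs.exists_reduced_word' v
  rw [phi_wordProd, phi_wordProd]
  simp

theorem phi_flip_self {t : W} (ht : cs.IsReflection t) (ε : ℤˣ) :
    phi cs t (t, ε) = (t, -ε) := by
  obtain ⟨v, i, rfl⟩ := ht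
  set t := v * s i * v⁻¹ with hts
  have hfix : v⁻¹ * t * v⁻¹⁻¹ = s i := by rw [hts]; group
  have hA : ∀ ε : ℤˣ, phi cs v⁻¹ (t, ε) = (s i, ε * (phi cs v⁻¹ (t, 1)).2) := by
    intro ε; rw [phi_apply', hfix]
  have hB : ∀ ε : ℤˣ, phi cs v (s i, ε) = (t, ε * (phi cs v (s i, 1)).2) := by
    intro ε; rw [phi_apply']
  set μ₂ := (phi cs v⁻¹ (t, 1)).2
  set μ₁ := (phi cs v (s i, 1)).2
  have hone : phi cs v (phi cs v⁻¹ (t, 1)) = (t, 1) := by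
    rw [← Equiv.Perm.mul_apply, ← map_mul, mul_inv_cancel, map_one, Equiv.Perm.one_apply]
  rw [hA, one_mul, hB] at hone
  have hμ : μ₂ * μ₁ = 1 := (Prod.ext_iff.mp hone).2
  calc phi cs t (t, ε) = phi cs v (phi cs (s i) (phi cs v⁻¹ (t, ε))) := by
        nth_rewrite 1 [hts]
        rw [map_mul, map_mul, Equiv.Perm.mul_apply, Equiv.Perm.mul_apply]
    _ = phi cs v (phi cs (s i) (s i, ε * μ₂)) := by rw [hA]
    _ = phi cs v (s i, -(ε * μ₂)) := by
        rw [phi_simple, sigma_apply, if_pos rfl]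
        congr 1
        rw [cs.simple_mul_simple_self, one_mul]
    _ = (t, -(ε * μ₂) * μ₁) := by rw [hB]
    _ = (t, -ε) := by rw [neg_mul, mul_assoc, hμ, mul_one]

theorem mem_rightInvSeq_of_isRightInversion {ω : List B} (hω : cs.IsReduced ω) {t : W}
    (ht : cs.IsReflection t) (hl : ℓ (π ω * t) < ℓ (π ω)) : t ∈ cs.rightInvSeq ω := by
  by_contra hmem
  obtain ⟨α, hα, hyα⟩ := cs.exists_reduced_word' (π ω * t)
  have hxy : π ω = (π ω * t) * t := by rw [mul_assoc, ht.mul_self, mul_one]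
  have h1 : phi cs (π ω) (t, 1) = phi cs (π ω * t) (t, -1) := by
    conv_lhs => rw [hxy]
    rw [map_mul, Equiv.Perm.mul_apply, phi_flip_self cs ht]
  rw [hyα, phi_wordProd, phi_wordProd] at h1
  have h2 := (Prod.ext_iff.mp h1).2
  rw [signOf_eq_one_of_not_mem hmem] at h2
  have hmem' : t ∈ cs.rightInvSeq α := by
    by_contra hmem'
    rw [signOf_eq_one_of_not_mem hmem'] at h2
    have h3 := congrArg Units.val h2
    norm_num at h3
  have hlt := (cs.isRightInversion_of_mem_rightInvSeq hα hmem').2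
  rw [← hyα] at hlt
  rw [← hxy] at hlt
  omega

theorem mem_leftInvSeq_of_isLeftInversion {ω : List B} (hred : cs.IsReduced ω) {t : W}
    (ht : cs.IsReflection t) (hl : ℓ (t * π ω) < ℓ (π ω)) : t ∈ cs.leftInvSeq ω := by
  have hrev : cs.IsReduced ω.reverse := (cs.isReduced_reverse_iff ω).mpr hred
  have hlen : ℓ (π ω.reverse * t) < ℓ (π ω.reverse) := by
    rw [cs.wordProd_reverse]
    have h1 : (π ω)⁻¹ * t = (t * π ω)⁻¹ * (t * t) := by group
    rw [h1, ht.mul_self, mul_one, cs.length_inv, cs.length_inv]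
    exact hl
  have hmem := mem_rightInvSeq_of_isRightInversion cs hrev ht hlen
  have := cs.leftInvSeq_reverse ω.reverse
  rw [List.reverse_reverse] at this
  rw [this]
  rwa [List.mem_reverse]

theorem take_eraseIdx_of_le {α : Type*} (l : List α) {m k : ℕ} (h : m ≤ k) :
    (l.eraseIdx k).take m = l.take m := by
  rw [List.eraseIdx_eq_take_drop_succ, List.take_append, List.take_take,
    min_eq_left h]
  rcases le_or_gt m l.length with h1 | h1
  · have h2 : m - (l.take k).length = 0 := by
      rw [List.length_take]; omega
    rw [h2, List.take_zero, List.append_nil]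
  · have h2 : l.drop (k + 1) = [] := List.drop_eq_nil_of_le (by omega)
    rw [h2, List.take_nil, List.append_nil]

theorem getD_leftInvSeq_eraseIdx (ω : List B) {i k : ℕ} (h : i < k) :
    (cs.leftInvSeq (ω.eraseIdx k)).getD i 1 = (cs.leftInvSeq ω).getD i 1 := by
  have htake : (ω.eraseIdx k).take (i + 1) = ω.take (i + 1) := take_eraseIdx_of_le ω h
  have e1 : cs.leftInvSeq ((ω.eraseIdx k).take (i + 1))
      = (cs.leftInvSeq (ω.eraseIdx k)).take (i + 1) := cs.leftInvSeq_take _ _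
  have e2 : cs.leftInvSeq (ω.take (i + 1)) = (cs.leftInvSeq ω).take (i + 1) :=
    cs.leftInvSeq_take _ _
  have e3 : ((cs.leftInvSeq (ω.eraseIdx k)).take (i + 1)).getD i 1
      = (cs.leftInvSeq (ω.eraseIdx k)).getD i 1 := by
    rw [List.getD_eq_getElem?_getD, List.getD_eq_getElem?_getD, List.getElem?_take,
      if_pos (Nat.lt_succ_self i)]
  have e4 : ((cs.leftInvSeq ω).take (i + 1)).getD i 1 = (cs.leftInvSeq ω).getD i 1 := by
    rw [List.getD_eq_getElem?_getD, List.getD_eq_getElem?_getD, List.getElem?_take,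
      if_pos (Nat.lt_succ_self i)]
  rw [← e3, ← e1, htake, e2, e4]

end CoxAux

open scoped Pointwise

/-- Let `x` be an element of minimal length in its coset `x • W_J` of a standard parabolic
subgroup `W_J` of a Coxeter group `W`. If two reflections `t₁, t₂` both shorten `x` and
`t₁ x W_J = t₂ x W_J`, then `t₁ = t₂`. -/
theorem reflections_eq_of_shorten_min_coset_rep {B W : Type*} [Group W] {M : CoxeterMatrix B}
    (cs : CoxeterSystem M W) (J : Set B) (x : W)
    (hx : ∀ w ∈ x • (Subgroup.closure (cs.simple '' J) : Set W), cs.length x ≤ cs.length w)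
    (t₁ t₂ : W) (ht₁ : cs.IsReflection t₁) (ht₂ : cs.IsReflection t₂)
    (hl₁ : cs.length (t₁ * x) < cs.length x) (hl₂ : cs.length (t₂ * x) < cs.length x)
    (hcoset : (t₁ * x) • (Subgroup.closure (cs.simple '' J) : Set W) =
      (t₂ * x) • (Subgroup.closure (cs.simple '' J) : Set W)) :
    t₁ = t₂ := by
  classical
  obtain ⟨ω, hred, hxw⟩ := cs.exists_reduced_word' x
  have hlx : cs.length x = ω.length := by rw [hxw]; exact hred
  -- extract an element of the parabolic subgroup relating the two cosets
  have hmem1 : t₁ * x ∈ (t₂ * x) • (Subgroup.closure (cs.simple '' J) : Set W) := by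
    rw [← hcoset]
    exact ⟨1, SetLike.mem_coe.mpr (Subgroup.one_mem _), by simp⟩
  obtain ⟨c, hc, hce⟩ := Set.mem_smul_set.mp hmem1
  rw [smul_eq_mul] at hce
  have hc' : c ∈ Subgroup.closure (cs.simple '' J) := SetLike.mem_coe.mp hc
  have h21 : t₂ * (t₁ * x) = x * c := by
    rw [← hce, ← mul_assoc, ← mul_assoc, ht₂.mul_self, one_mul]
  have h12 : t₁ * (t₂ * x) = x * c⁻¹ := by
    have : t₂ * x = t₁ * x * c⁻¹ := by rw [← hce, mul_assoc, mul_inv_cancel, mul_one]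
    rw [this, ← mul_assoc, ← mul_assoc, ht₁.mul_self, one_mul]
  have hb1 : cs.length x ≤ cs.length (t₂ * (t₁ * x)) := by
    apply hx
    rw [h21, ← smul_eq_mul]
    exact Set.smul_mem_smul_set hc
  have hb2 : cs.length x ≤ cs.length (t₁ * (t₂ * x)) := by
    apply hx
    rw [h12, ← smul_eq_mul]
    exact Set.smul_mem_smul_set (SetLike.mem_coe.mpr (Subgroup.inv_mem _ hc'))
  -- strong exchange
  have m1 : t₁ ∈ cs.leftInvSeq ω :=
    CoxAux.mem_leftInvSeq_of_isLeftInversion cs hred ht₁ (by rw [← hxw]; exact hl₁)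
  have m2 : t₂ ∈ cs.leftInvSeq ω :=
    CoxAux.mem_leftInvSeq_of_isLeftInversion cs hred ht₂ (by rw [← hxw]; exact hl₂)
  obtain ⟨k, hk, hk1⟩ := List.mem_iff_getElem.mp m1
  obtain ⟨i, hi, hi2⟩ := List.mem_iff_getElem.mp m2
  rw [cs.length_leftInvSeq] at hk hi
  have gk : (cs.leftInvSeq ω).getD k 1 = t₁ := by
    rw [List.getD_eq_getElem _ _ (by rw [cs.length_leftInvSeq]; exact hk)]
    exact hk1
  have gi : (cs.leftInvSeq ω).getD i 1 = t₂ := by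
    rw [List.getD_eq_getElem _ _ (by rw [cs.length_leftInvSeq]; exact hi)]
    exact hi2
  have e1 : t₁ * x = cs.wordProd (ω.eraseIdx k) := by
    rw [hxw, ← gk]; exact cs.getD_leftInvSeq_mul_wordProd ω k
  have e2 : t₂ * x = cs.wordProd (ω.eraseIdx i) := by
    rw [hxw, ← gi]; exact cs.getD_leftInvSeq_mul_wordProd ω i
  rcases lt_trichotomy i k with hik | hik | hik
  · -- i < k : contradiction
    exfalso
    have gkey : (cs.leftInvSeq (ω.eraseIdx k)).getD i 1 = t₂ := by
      rw [CoxAux.getD_leftInvSeq_eraseIdx cs ω hik, gi]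
    have e3 : t₂ * (t₁ * x) = cs.wordProd ((ω.eraseIdx k).eraseIdx i) := by
      rw [e1, ← gkey]; exact cs.getD_leftInvSeq_mul_wordProd _ i
    have lb := cs.length_wordProd_le ((ω.eraseIdx k).eraseIdx i)
    rw [← e3] at lb
    have lk : (ω.eraseIdx k).length = ω.length - 1 := by
      rw [List.length_eraseIdx, if_pos hk]
    have li : ((ω.eraseIdx k).eraseIdx i).length = ω.length - 2 := by
      rw [List.length_eraseIdx, lk, if_pos (by omega)]
      omega
    omega
  · -- i = k : the reflections coincide
    subst hik
    exact hk1.symm.trans hi2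
  · -- k < i : contradiction
    exfalso
    have gkey : (cs.leftInvSeq (ω.eraseIdx i)).getD k 1 = t₁ := by
      rw [CoxAux.getD_leftInvSeq_eraseIdx cs ω hik, gk]
    have e3 : t₁ * (t₂ * x) = cs.wordProd ((ω.eraseIdx i).eraseIdx k) := by
      rw [e2, ← gkey]; exact cs.getD_leftInvSeq_mul_wordProd _ k
    have lb := cs.length_wordProd_le ((ω.eraseIdx i).eraseIdx k)
    rw [← e3] at lb
    have lk : (ω.eraseIdx i).length = ω.length - 1 := by
      rw [List.length_eraseIdx, if_pos hi]
    have li : ((ω.eraseIdx i).eraseIdx k).length = ω.length - 2 := by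
      rw [List.length_eraseIdx, lk, if_pos (by omega)]
      omega
    omega
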